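/- arXiv:1111.3380 — 2 statements merged into one kernel-verified Lean document; each statement's English description precedes it below -/
import Mathlib

section
/- Fix λ > 0. If d = d(x) is a function with d ~ λ·log x as x → ∞, then I(x, d) = ∫₂^x exp(-d/log t)·dt/(log t)² satisfies I(x, d) ~ e^{-λ}·x/(log x)² as x → ∞. -/
open Real Filter

lemma ias_contOn (D a b : ℝ) (ha : 2 ≤ a) (hab : a ≤ b) :
    ContinuousOn (fun t => Real.exp (-D / Real.log t) / (Real.log t) ^ 2) (Set.uIcc a b) := by
  have hsub : Set.uIcc a b ⊆ Set.Ici (2:ℝ) := by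
    rw [Set.uIcc_of_le hab]
    exact fun t ht => le_trans ha ht.1
  have hlog : ∀ t ∈ Set.uIcc a b, Real.log t ≠ 0 := by
    intro t ht
    have h2 : (2:ℝ) ≤ t := hsub ht
    have := Real.log_pos (by linarith : (1:ℝ) < t)
    linarith
  have hlc : ContinuousOn Real.log (Set.uIcc a b) := by
    apply Real.continuousOn_log.mono
    intro t ht
    have h2 : (2:ℝ) ≤ t := hsub ht
    simp only [Set.mem_compl_iff, Set.mem_singleton_iff]
    intro h; rw [h] at h2; norm_num at h2
  apply ContinuousOn.div
  · exact Real.continuous_exp.comp_continuousOn (ContinuousOn.div continuousOn_const hlc hlog)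
  · exact hlc.pow 2
  · intro t ht; exact pow_ne_zero 2 (hlog t ht)

lemma ias_intble (D a b : ℝ) (ha : 2 ≤ a) (hab : a ≤ b) :
    IntervalIntegrable (fun t => Real.exp (-D / Real.log t) / (Real.log t) ^ 2)
      MeasureTheory.volume a b :=
  (ias_contOn D a b ha hab).intervalIntegrable

set_option maxHeartbeats 1000000 in
/-- If `d = d(x) ~ λ log x` as `x → ∞` with `λ > 0`, then
`I(x,d) = ∫₂^x exp(-d/log t) dt/(log t)² ~ e^{-λ} x/(log x)²`. -/
theorem I_asymptotic (lam : ℝ) (hlam : 0 < lam) (d : ℝ → ℝ)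
    (hd : Tendsto (fun x => d x / (lam * Real.log x)) atTop (nhds 1)) :
    Tendsto (fun x =>
        (∫ t in (2:ℝ)..x, Real.exp (-(d x) / Real.log t) / (Real.log t) ^ 2) /
          (Real.exp (-lam) * x / (Real.log x) ^ 2)) atTop (nhds 1) := by
  -- basic limit facts
  have hdl : Tendsto (fun x => d x / Real.log x) atTop (nhds lam) := by
    have h := hd.const_mul lam
    rw [mul_one] at h
    refine h.congr fun x => ?_
    rw [← mul_div_assoc, mul_div_mul_left _ _ (ne_of_gt hlam)]
  have hr : Tendsto (fun x => Real.log (Real.log x) / Real.log x) atTop (nhds 0) := by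
    have h1 := (Real.tendsto_pow_log_div_mul_add_atTop 1 0 1 one_ne_zero).comp
      Real.tendsto_log_atTop
    refine h1.congr fun x => ?_
    simp [Function.comp]
  have hM : Tendsto (fun x => Real.log x / (Real.log x - 3 * Real.log (Real.log x)))
      atTop (nhds 1) := by
    have h2 : Tendsto (fun x => (1 - 3 * (Real.log (Real.log x) / Real.log x))⁻¹)
        atTop (nhds 1) := by
      have h := ((tendsto_const_nhds (x := (1:ℝ)) (f := atTop)).sub (hr.const_mul 3)).inv₀
        (by norm_num)
      simpa using h
    apply h2.congr'
    filter_upwards [Real.tendsto_log_atTop.eventually_gt_atTop 0] with x hx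
    have hx' : Real.log x ≠ 0 := ne_of_gt hx
    rw [show 1 - 3 * (Real.log (Real.log x) / Real.log x)
        = (Real.log x - 3 * Real.log (Real.log x)) / Real.log x by field_simp, inv_div]
  have hDM : Tendsto (fun x => d x / (Real.log x - 3 * Real.log (Real.log x)))
      atTop (nhds lam) := by
    have h := hdl.mul hM
    rw [mul_one] at h
    apply h.congr'
    filter_upwards [Real.tendsto_log_atTop.eventually_gt_atTop 0] with x hx
    rw [div_mul_div_comm, mul_comm (d x), mul_div_mul_left _ _ (ne_of_gt hx)]
  -- the lower and upper comparison functions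
  have hLo : Tendsto (fun x => Real.exp (lam - d x / (Real.log x - 3 * Real.log (Real.log x)))
      * (1 - 1 / (Real.log x) ^ 3)) atTop (nhds 1) := by
    have hexp : Tendsto (fun x => Real.exp (lam - d x / (Real.log x - 3 * Real.log (Real.log x))))
        atTop (nhds 1) := by
      have h := (tendsto_const_nhds (x := lam) (f := atTop)).sub hDM
      rw [sub_self] at h
      simpa [Function.comp_def] using (Real.continuous_exp.tendsto 0).comp h
    have hcube : Tendsto (fun x => 1 / (Real.log x) ^ 3) atTop (nhds 0) := by
      have h := ((tendsto_pow_atTop (three_ne_zero)).comp Real.tendsto_log_atTop).inv_tendsto_atTop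
      refine h.congr fun x => ?_
      simp [Pi.inv_apply, Function.comp, one_div]
    have := hexp.mul ((tendsto_const_nhds (x := (1:ℝ)) (f := atTop)).sub hcube)
    simpa using this
  have hUp : Tendsto (fun x => Real.exp (lam - d x / Real.log x)
      * (1 / ((Real.log 2) ^ 2 * Real.log x)
        + (Real.log x) ^ 2 / (Real.log x - 3 * Real.log (Real.log x)) ^ 2)) atTop (nhds 1) := by
    have hexp : Tendsto (fun x => Real.exp (lam - d x / Real.log x)) atTop (nhds 1) := by
      have h := (tendsto_const_nhds (x := lam) (f := atTop)).sub hdl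
      rw [sub_self] at h
      simpa [Function.comp_def] using (Real.continuous_exp.tendsto 0).comp h
    have h1 : Tendsto (fun x => 1 / ((Real.log 2) ^ 2 * Real.log x)) atTop (nhds 0) := by
      have h := (Real.tendsto_log_atTop.const_mul_atTop
        (show (0:ℝ) < (Real.log 2) ^ 2 by positivity)).inv_tendsto_atTop
      refine h.congr fun x => ?_
      simp [Pi.inv_apply, one_div, mul_comm]
    have h2 : Tendsto (fun x => (Real.log x) ^ 2 / (Real.log x - 3 * Real.log (Real.log x)) ^ 2)
        atTop (nhds 1) := by
      have h := hM.pow 2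
      rw [one_pow] at h
      refine h.congr fun x => ?_
      rw [div_pow]
    have := hexp.mul (h1.add h2)
    simpa using this
  refine tendsto_of_tendsto_of_tendsto_of_le_of_le' hLo hUp ?_ ?_
  · -- lower bound
    have h12 := (Real.tendsto_pow_log_div_mul_add_atTop 1 0 3 one_ne_zero).eventually
      (eventually_le_nhds (by norm_num : (0:ℝ) < 1/2))
    filter_upwards [eventually_ge_atTop (3:ℝ),
      hd.eventually (eventually_gt_nhds one_pos),
      hr.eventually (eventually_le_nhds (by norm_num : (0:ℝ) < 1/6)),
      h12, Real.tendsto_log_atTop.eventually_ge_atTop 1] with x hx3 hdp h6 hhalf hL1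
    set L := Real.log x with hLdef
    set D := d x with hDdef
    set M := L - 3 * Real.log L with hMdef
    set y := x / L ^ 3 with hydef
    have hxpos : (0:ℝ) < x := by linarith
    have hLpos : (0:ℝ) < L := by linarith
    have hD : 0 ≤ D := by
      rcases div_pos_iff.mp hdp with ⟨h, _⟩ | ⟨_, h⟩
      · exact h.le
      · nlinarith
    have hlogL : Real.log L ≤ L / 6 := by
      have := (div_le_iff₀ hLpos).mp h6
      linarith
    have hM2 : L / 2 ≤ M := by rw [hMdef]; linarith
    have hMpos : 0 < M := by linarith
    have hML : M ≤ L := by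
      have := Real.log_nonneg hL1
      rw [hMdef]; linarith
    have hhalf' : L ^ 3 / x ≤ 1/2 := by simpa using hhalf
    have hy2 : (2:ℝ) ≤ y := by
      rw [hydef, le_div_iff₀ (by positivity)]
      nlinarith [(div_le_iff₀ hxpos).mp hhalf']
    have hyx : y ≤ x := div_le_self hxpos.le (one_le_pow₀ hL1)
    have hlogy : Real.log y = M := by
      rw [hydef, Real.log_div (ne_of_gt hxpos) (by positivity), Real.log_pow, hMdef]
      push_cast; ring
    have hlog2 : 0 < Real.log 2 := Real.log_pos one_lt_two
    have hden : 0 < Real.exp (-lam) * x / L ^ 2 := by positivity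
    -- the integral lower bound
    have hsplit := (intervalIntegral.integral_add_adjacent_intervals
      (ias_intble D 2 y le_rfl hy2) (ias_intble D y x hy2 hyx))
    have hLB1 : 0 ≤ ∫ t in (2:ℝ)..y, Real.exp (-D / Real.log t) / (Real.log t) ^ 2 := by
      apply intervalIntegral.integral_nonneg hy2
      intro t _
      positivity
    have hLB2 : (x - y) * (Real.exp (-D/M) / L ^ 2)
        ≤ ∫ t in y..x, Real.exp (-D / Real.log t) / (Real.log t) ^ 2 := by
      have h := intervalIntegral.integral_mono_on hyx
        (intervalIntegrable_const (c := Real.exp (-D/M) / L ^ 2))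
        (ias_intble D y x hy2 hyx) ?_
      · simpa [mul_div_assoc] using h
      · intro t ht
        have h2t : 2 ≤ t := le_trans hy2 ht.1
        have hMt : M ≤ Real.log t := by
          rw [← hlogy]
          exact Real.log_le_log (by linarith) ht.1
        have hltx : Real.log t ≤ L := Real.log_le_log (by linarith) ht.2
        have hltpos : 0 < Real.log t := by linarith
        apply div_le_div₀ (by positivity) ?_ (pow_pos hltpos 2) (by nlinarith)
        apply Real.exp_le_exp.mpr
        rw [neg_div, neg_div, neg_le_neg_iff]
        gcongr
    rw [le_div_iff₀ hden]
    have hexpm : Real.exp (lam - D/M) * Real.exp (-lam) = Real.exp (-D/M) := by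
      rw [← Real.exp_add]; ring_nf
    calc Real.exp (lam - D/M) * (1 - 1 / L ^ 3) * (Real.exp (-lam) * x / L ^ 2)
        = Real.exp (lam - D/M) * Real.exp (-lam) * ((1 - 1 / L ^ 3) * x / L ^ 2) := by ring
      _ = Real.exp (-D/M) * ((1 - 1 / L ^ 3) * x / L ^ 2) := by rw [hexpm]
      _ = (x - y) * (Real.exp (-D/M) / L ^ 2) := by rw [hydef]; ring
      _ ≤ ∫ t in y..x, Real.exp (-D / Real.log t) / (Real.log t) ^ 2 := hLB2
      _ ≤ ∫ t in (2:ℝ)..x, Real.exp (-D / Real.log t) / (Real.log t) ^ 2 := by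
          rw [← hsplit]; linarith
  · -- upper bound
    have h12 := (Real.tendsto_pow_log_div_mul_add_atTop 1 0 3 one_ne_zero).eventually
      (eventually_le_nhds (by norm_num : (0:ℝ) < 1/2))
    filter_upwards [eventually_ge_atTop (3:ℝ),
      hd.eventually (eventually_gt_nhds one_pos),
      hr.eventually (eventually_le_nhds (by norm_num : (0:ℝ) < 1/6)),
      h12, Real.tendsto_log_atTop.eventually_ge_atTop 1] with x hx3 hdp h6 hhalf hL1
    set L := Real.log x with hLdef
    set D := d x with hDdef
    set M := L - 3 * Real.log L with hMdef
    set y := x / L ^ 3 with hydef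
    have hxpos : (0:ℝ) < x := by linarith
    have hLpos : (0:ℝ) < L := by linarith
    have hD : 0 ≤ D := by
      rcases div_pos_iff.mp hdp with ⟨h, _⟩ | ⟨_, h⟩
      · exact h.le
      · nlinarith
    have hlogL : Real.log L ≤ L / 6 := by
      have := (div_le_iff₀ hLpos).mp h6
      linarith
    have hM2 : L / 2 ≤ M := by rw [hMdef]; linarith
    have hMpos : 0 < M := by linarith
    have hML : M ≤ L := by
      have := Real.log_nonneg hL1
      rw [hMdef]; linarith
    have hhalf' : L ^ 3 / x ≤ 1/2 := by simpa using hhalf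
    have hy2 : (2:ℝ) ≤ y := by
      rw [hydef, le_div_iff₀ (by positivity)]
      nlinarith [(div_le_iff₀ hxpos).mp hhalf']
    have hyx : y ≤ x := div_le_self hxpos.le (one_le_pow₀ hL1)
    have hlogy : Real.log y = M := by
      rw [hydef, Real.log_div (ne_of_gt hxpos) (by positivity), Real.log_pow, hMdef]
      push_cast; ring
    have hlog2 : 0 < Real.log 2 := Real.log_pos one_lt_two
    have hden : 0 < Real.exp (-lam) * x / L ^ 2 := by positivity
    have hsplit := (intervalIntegral.integral_add_adjacent_intervals
      (ias_intble D 2 y le_rfl hy2) (ias_intble D y x hy2 hyx))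
    have hUB1 : (∫ t in (2:ℝ)..y, Real.exp (-D / Real.log t) / (Real.log t) ^ 2)
        ≤ (y - 2) * (Real.exp (-D/L) / (Real.log 2) ^ 2) := by
      have h := intervalIntegral.integral_mono_on hy2
        (ias_intble D 2 y le_rfl hy2)
        (intervalIntegrable_const (c := Real.exp (-D/L) / (Real.log 2) ^ 2)) ?_
      · simpa [mul_div_assoc] using h
      · intro t ht
        have h2t : 2 ≤ t := ht.1
        have hl2t : Real.log 2 ≤ Real.log t := Real.log_le_log (by norm_num) h2t
        have hltx : Real.log t ≤ L := Real.log_le_log (by linarith) (le_trans ht.2 hyx)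
        have hltpos : 0 < Real.log t := lt_of_lt_of_le hlog2 hl2t
        apply div_le_div₀ (by positivity) ?_ (by positivity) (by nlinarith)
        apply Real.exp_le_exp.mpr
        rw [neg_div, neg_div, neg_le_neg_iff]
        gcongr
    have hUB2 : (∫ t in y..x, Real.exp (-D / Real.log t) / (Real.log t) ^ 2)
        ≤ (x - y) * (Real.exp (-D/L) / M ^ 2) := by
      have h := intervalIntegral.integral_mono_on hyx
        (ias_intble D y x hy2 hyx)
        (intervalIntegrable_const (c := Real.exp (-D/L) / M ^ 2)) ?_
      · simpa [mul_div_assoc] using h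
      · intro t ht
        have h2t : 2 ≤ t := le_trans hy2 ht.1
        have hMt : M ≤ Real.log t := by
          rw [← hlogy]
          exact Real.log_le_log (by linarith) ht.1
        have hltx : Real.log t ≤ L := Real.log_le_log (by linarith) ht.2
        have hltpos : 0 < Real.log t := by linarith
        apply div_le_div₀ (by positivity) ?_ (pow_pos hMpos 2) (by nlinarith)
        apply Real.exp_le_exp.mpr
        rw [neg_div, neg_div, neg_le_neg_iff]
        gcongr
    rw [div_le_iff₀ hden]
    have hexpm : Real.exp (lam - D/L) * Real.exp (-lam) = Real.exp (-D/L) := by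
      rw [← Real.exp_add]; ring_nf
    have hLn : L ≠ 0 := ne_of_gt hLpos
    have hMn : M ≠ 0 := ne_of_gt hMpos
    have hl2n : Real.log 2 ≠ 0 := ne_of_gt hlog2
    have hkey : Real.exp (lam - D/L)
        * (1 / ((Real.log 2) ^ 2 * L) + L ^ 2 / M ^ 2) * (Real.exp (-lam) * x / L ^ 2)
        = (y - 0) * (Real.exp (-D/L) / (Real.log 2) ^ 2) + x * (Real.exp (-D/L) / M ^ 2) := by
      rw [← hexpm, hydef]
      field_simp
      ring
    calc (∫ t in (2:ℝ)..x, Real.exp (-D / Real.log t) / (Real.log t) ^ 2)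
        = (∫ t in (2:ℝ)..y, Real.exp (-D / Real.log t) / (Real.log t) ^ 2)
          + ∫ t in y..x, Real.exp (-D / Real.log t) / (Real.log t) ^ 2 := hsplit.symm
      _ ≤ (y - 2) * (Real.exp (-D/L) / (Real.log 2) ^ 2)
          + (x - y) * (Real.exp (-D/L) / M ^ 2) := add_le_add hUB1 hUB2
      _ ≤ (y - 0) * (Real.exp (-D/L) / (Real.log 2) ^ 2) + x * (Real.exp (-D/L) / M ^ 2) := by
          have c1 : 0 ≤ Real.exp (-D/L) / (Real.log 2) ^ 2 := by positivity
          have c2 : 0 ≤ Real.exp (-D/L) / M ^ 2 := by positivity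
          nlinarith [hy2]
      _ = Real.exp (lam - D/L)
          * (1 / ((Real.log 2) ^ 2 * L) + L ^ 2 / M ^ 2) * (Real.exp (-lam) * x / L ^ 2) :=
          hkey.symm
end

section
/- Setting d̄ = d/log x, for all x ≥ 16 and 0 < d ≤ (log x)² one has I(x, d) = e^{-d̄}·(x/(log x)²)·(1 + O((1 + d̄)·log log x / log x)), with an absolute implied constant. -/
open Real MeasureTheory


lemma cube_le_exp (u : ℝ) (hu : 0 ≤ u) : u ^ 3 ≤ 27 * Real.exp u := by
  have h := Real.add_one_le_exp (u / 3)
  have h2 : (u / 3) ^ 3 ≤ (u / 3 + 1) ^ 3 := by nlinarith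
  have h3 : (u / 3 + 1) ^ 3 ≤ (Real.exp (u / 3)) ^ 3 :=
    pow_le_pow_left₀ (by positivity) (by linarith) 3
  have h4 : (Real.exp (u / 3)) ^ 3 = Real.exp u := by
    rw [← Real.exp_nat_mul]; congr 1; push_cast; ring
  nlinarith [h2, h3, h4]

lemma log_le_half (y : ℝ) (hy : 0 < y) : Real.log y ≤ y / 2 := by
  have hs : 0 < Real.sqrt y := Real.sqrt_pos.mpr hy
  have h1 : Real.log (Real.sqrt y) ≤ Real.sqrt y - 1 := Real.log_le_sub_one_of_pos hs
  have h2 : Real.log y = 2 * Real.log (Real.sqrt y) := by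
    rw [Real.log_sqrt hy.le]; ring
  have h3 : (Real.sqrt y) ^ 2 = y := Real.sq_sqrt hy.le
  nlinarith [h1, h2, h3, sq_nonneg (Real.sqrt y - 2)]


lemma logt_pos {t : ℝ} (ht : 2 ≤ t) : 0 < Real.log t := Real.log_pos (by linarith)

lemma contOn_log {a b : ℝ} (ha : 2 ≤ a) : ContinuousOn Real.log (Set.Icc a b) :=
  Real.continuousOn_log.mono (fun t ht => by
    have := ht.1
    simp only [Set.mem_compl_iff, Set.mem_singleton_iff]
    intro h; rw [h] at this; linarith)

lemma contOn_inv_log_pow (k : ℕ) {a b : ℝ} (ha : 2 ≤ a) :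
    ContinuousOn (fun t : ℝ => 1 / (Real.log t) ^ k) (Set.Icc a b) := by
  apply ContinuousOn.div continuousOn_const ((contOn_log ha).pow k)
  intro t ht
  exact pow_ne_zero _ (logt_pos (le_trans ha ht.1)).ne'

lemma contOn_exp_div (d : ℝ) {a b : ℝ} (ha : 2 ≤ a) :
    ContinuousOn (fun t : ℝ => Real.exp (-d / Real.log t) / (Real.log t) ^ 2)
      (Set.Icc a b) := by
  have hne : ∀ t ∈ Set.Icc a b, Real.log t ≠ 0 :=
    fun t ht => (logt_pos (le_trans ha ht.1)).ne'
  apply ContinuousOn.div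
  · exact Real.continuous_exp.comp_continuousOn
      (ContinuousOn.div continuousOn_const (contOn_log ha) hne)
  · exact (contOn_log ha).pow 2
  · intro t ht; exact pow_ne_zero _ (hne t ht)

lemma ii_inv (k : ℕ) {a b : ℝ} (ha : 2 ≤ a) (hab : a ≤ b) :
    IntervalIntegrable (fun t : ℝ => 1 / (Real.log t) ^ k) volume a b := by
  apply ContinuousOn.intervalIntegrable
  rw [Set.uIcc_of_le hab]; exact contOn_inv_log_pow k ha

lemma ii_exp (d : ℝ) {a b : ℝ} (ha : 2 ≤ a) (hab : a ≤ b) :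
    IntervalIntegrable (fun t : ℝ => Real.exp (-d / Real.log t) / (Real.log t) ^ 2)
      volume a b := by
  apply ContinuousOn.intervalIntegrable
  rw [Set.uIcc_of_le hab]; exact contOn_exp_div d ha

lemma ftc {x : ℝ} (hx : 2 ≤ x) :
    ∫ t in (2:ℝ)..x, (1 / (Real.log t) ^ 2 - 2 * (1 / (Real.log t) ^ 3)) =
      x / (Real.log x) ^ 2 - 2 / (Real.log 2) ^ 2 := by
  apply intervalIntegral.integral_eq_sub_of_hasDerivAt (f := fun t => t / (Real.log t) ^ 2)
  · intro t ht
    rw [Set.uIcc_of_le hx] at ht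
    have h2t : (2:ℝ) ≤ t := ht.1
    have hlt : 0 < Real.log t := logt_pos h2t
    have htpos : 0 < t := by linarith
    have hd : HasDerivAt (fun t => t / (Real.log t) ^ 2)
        ((1 * (Real.log t) ^ 2 - t * (2 * Real.log t ^ 1 * t⁻¹)) / ((Real.log t) ^ 2) ^ 2) t :=
      (hasDerivAt_id t).div ((Real.hasDerivAt_log htpos.ne').pow 2) (pow_ne_zero _ hlt.ne')
    convert hd using 1
    · rfl
    · rfl
    have hl := hlt.ne'
    have ht0 := htpos.ne'
    field_simp
  · apply IntervalIntegrable.sub (ii_inv 2 le_rfl hx)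
    exact (ii_inv 3 le_rfl hx).const_mul 2

lemma int_sq_le {x : ℝ} (hx : 16 ≤ x) :
    ∫ t in (2:ℝ)..x, 1 / (Real.log t) ^ 2 ≤
      x / (Real.log x) ^ 2 + 1744 * x / (Real.log x) ^ 3 := by
  have hx2 : (2:ℝ) ≤ x := by linarith
  have hx0 : (0:ℝ) < x := by linarith
  set L := Real.log x with hLdef
  have hL0 : 0 < L := logt_pos hx2
  set s := Real.sqrt x with hsdef
  have hs0 : 0 ≤ s := Real.sqrt_nonneg x
  have hsq : s ^ 2 = x := Real.sq_sqrt hx0.le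
  have hs2 : (2:ℝ) ≤ s := by nlinarith
  have hsx : s ≤ x := by nlinarith
  have hlogs : Real.log s = L / 2 := Real.log_sqrt hx0.le
  -- s = exp (L/2)
  have hsexp : s = Real.exp (L / 2) := by
    have h1 : x = (Real.exp (L / 2)) ^ 2 := by
      rw [← Real.exp_nat_mul]
      rw [show ((2:ℕ):ℝ) * (L / 2) = L by push_cast; ring]
      rw [hLdef, Real.exp_log hx0]
    rw [hsdef, h1, Real.sqrt_sq (Real.exp_pos _).le]
  have hcube : L ^ 3 ≤ 216 * s := by
    have := cube_le_exp (L / 2) (by positivity)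
    rw [← hsexp] at this
    nlinarith
  -- bound for the cubed integral
  have key3 : ∫ t in (2:ℝ)..x, 1 / (Real.log t) ^ 3 ≤ 872 * x / L ^ 3 := by
    have hsplit := intervalIntegral.integral_add_adjacent_intervals
      (ii_inv 3 le_rfl hs2) (ii_inv 3 hs2 hsx)
    have b1 : ∫ t in (2:ℝ)..s, 1 / (Real.log t) ^ 3 ≤ (s - 2) * 4 := by
      calc ∫ t in (2:ℝ)..s, 1 / (Real.log t) ^ 3 ≤ ∫ _ in (2:ℝ)..s, (4:ℝ) := by
            apply intervalIntegral.integral_mono_on hs2 (ii_inv 3 le_rfl hs2)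
              intervalIntegrable_const
            intro t ht
            have hlt : 0 < Real.log t := logt_pos ht.1
            have h2 : (0.6931471803:ℝ) < Real.log t := by
              calc (0.6931471803:ℝ) < Real.log 2 := Real.log_two_gt_d9
                _ ≤ Real.log t := Real.log_le_log (by norm_num) ht.1
            rw [div_le_iff₀ (by positivity)]
            have h3 : (0.6931471803:ℝ) ^ 3 ≤ (Real.log t) ^ 3 :=
              pow_le_pow_left₀ (by norm_num) h2.le 3
            nlinarith
        _ = (s - 2) * 4 := by rw [intervalIntegral.integral_const]; simp
    have b2 : ∫ t in s..x, 1 / (Real.log t) ^ 3 ≤ (x - s) * (8 / L ^ 3) := by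
      calc ∫ t in s..x, 1 / (Real.log t) ^ 3 ≤ ∫ _ in s..x, (8 / L ^ 3) := by
            apply intervalIntegral.integral_mono_on hsx (ii_inv 3 hs2 hsx)
              intervalIntegrable_const
            intro t ht
            have hlt : 0 < Real.log t := logt_pos (le_trans hs2 ht.1)
            have hlo : L / 2 ≤ Real.log t := by
              rw [← hlogs]; exact Real.log_le_log (by linarith) ht.1
            have hp : (L / 2) ^ 3 ≤ (Real.log t) ^ 3 :=
              pow_le_pow_left₀ (by positivity) hlo 3
            rw [div_le_div_iff₀ (by positivity) (by positivity)]
            nlinarith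
        _ = (x - s) * (8 / L ^ 3) := by rw [intervalIntegral.integral_const]; simp
    have h4s : 4 * s ≤ 864 * x / L ^ 3 := by
      rw [le_div_iff₀ (by positivity)]
      nlinarith
    have hsL : 0 ≤ 8 / L ^ 3 := by positivity
    calc ∫ t in (2:ℝ)..x, 1 / (Real.log t) ^ 3
        = (∫ t in (2:ℝ)..s, 1 / (Real.log t) ^ 3) + ∫ t in s..x, 1 / (Real.log t) ^ 3 :=
          hsplit.symm
      _ ≤ (s - 2) * 4 + (x - s) * (8 / L ^ 3) := by linarith
      _ ≤ 4 * s + 8 * x / L ^ 3 := by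
          have : (x - s) * (8 / L ^ 3) ≤ x * (8 / L ^ 3) := by nlinarith
          have hx8 : x * (8 / L ^ 3) = 8 * x / L ^ 3 := by ring
          nlinarith
      _ ≤ 872 * x / L ^ 3 := by
          have : 864 * x / L ^ 3 + 8 * x / L ^ 3 = 872 * x / L ^ 3 := by ring
          linarith
  -- the identity from ftc
  have hI := ftc hx2
  rw [intervalIntegral.integral_sub (ii_inv 2 le_rfl hx2)
      ((ii_inv 3 le_rfl hx2).const_mul 2),
    intervalIntegral.integral_const_mul] at hI
  have hlog2 : (0:ℝ) < 2 / (Real.log 2) ^ 2 := by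
    have := Real.log_two_gt_d9; positivity
  rw [← hLdef] at hI
  have hdouble : 2 * (872 * x / L ^ 3) = 1744 * x / L ^ 3 := by ring
  linarith

set_option maxHeartbeats 1000000 in
/-- With `d̄ = d/log x`, for `x ≥ 16` and `0 < d ≤ (log x)²`,
`I(x,d) = e^{-d̄} (x/(log x)²) (1 + O((1+d̄) log log x / log x))`,
with an absolute implied constant. -/
theorem I_two_sided :
    ∃ C : ℝ, 0 < C ∧ ∀ x : ℝ, 16 ≤ x → ∀ d : ℝ, 0 < d → d ≤ (Real.log x) ^ 2 →
      |(∫ t in (2:ℝ)..x, Real.exp (-d / Real.log t) / (Real.log t) ^ 2) -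
          Real.exp (-(d / Real.log x)) * (x / (Real.log x) ^ 2)| ≤
        Real.exp (-(d / Real.log x)) * (x / (Real.log x) ^ 2) *
          (C * (1 + d / Real.log x) * Real.log (Real.log x) / Real.log x) := by
  refine ⟨2000, by norm_num, ?_⟩
  intro x hx d hd hd2
  have hx2 : (2:ℝ) ≤ x := by linarith
  have hx0 : (0:ℝ) < x := by linarith
  set L := Real.log x with hLdef
  have hL0 : 0 < L := logt_pos hx2
  have hLge : (2.772:ℝ) ≤ L := by
    have h16 : Real.log 16 = 4 * Real.log 2 := by
      rw [show (16:ℝ) = 2 ^ 4 by norm_num, Real.log_pow]; push_cast; ring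
    have hm : Real.log 16 ≤ Real.log x := Real.log_le_log (by norm_num) hx
    have h2 := Real.log_two_gt_d9
    rw [hLdef]; linarith
  have hL1 : (1:ℝ) ≤ L := by linarith
  set l := Real.log L with hldef
  have hl1 : (1:ℝ) ≤ l := by
    have he : Real.exp 1 ≤ L := by
      have := Real.exp_one_lt_d9; linarith
    calc (1:ℝ) = Real.log (Real.exp 1) := (Real.log_exp 1).symm
      _ ≤ Real.log L := Real.log_le_log (Real.exp_pos 1) he
  have hl2 : l ≤ L / 2 := by rw [hldef]; exact log_le_half L hL0
  have hl0 : (0:ℝ) < l := by linarith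
  have hdb0 : (0:ℝ) < d / L := by positivity
  set A := Real.exp (-(d / L)) with hAdef
  have hA0 : 0 < A := Real.exp_pos _
  set M := A * (x / L ^ 2) with hMdef
  have hM0 : 0 < M := by positivity
  set E := M * (2000 * (1 + d / L) * l / L) with hEdef
  -- upper bound
  have hup : (∫ t in (2:ℝ)..x, Real.exp (-d / Real.log t) / (Real.log t) ^ 2) ≤
      A * (x / L ^ 2 + 1744 * x / L ^ 3) := by
    have hmono : (∫ t in (2:ℝ)..x, Real.exp (-d / Real.log t) / (Real.log t) ^ 2) ≤
        ∫ t in (2:ℝ)..x, A * (1 / (Real.log t) ^ 2) := by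
      apply intervalIntegral.integral_mono_on hx2 (ii_exp d le_rfl hx2)
        ((ii_inv 2 le_rfl hx2).const_mul A)
      intro t ht
      have hlt : 0 < Real.log t := logt_pos ht.1
      have hle : Real.log t ≤ L := Real.log_le_log (by linarith [ht.1]) ht.2
      have hexp : Real.exp (-d / Real.log t) ≤ A := by
        rw [hAdef]
        apply Real.exp_le_exp.mpr
        rw [neg_div]
        apply neg_le_neg
        rw [div_le_div_iff₀ hL0 hlt]
        nlinarith
      rw [mul_one_div]
      exact (div_le_div_iff_of_pos_right (pow_pos hlt 2)).mpr hexp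
    rw [intervalIntegral.integral_const_mul] at hmono
    have h2 := int_sq_le hx
    rw [← hLdef] at h2
    calc (∫ t in (2:ℝ)..x, Real.exp (-d / Real.log t) / (Real.log t) ^ 2)
        ≤ A * ∫ t in (2:ℝ)..x, 1 / (Real.log t) ^ 2 := hmono
      _ ≤ A * (x / L ^ 2 + 1744 * x / L ^ 3) := mul_le_mul_of_nonneg_left h2 hA0.le
  have hup2 : (∫ t in (2:ℝ)..x, Real.exp (-d / Real.log t) / (Real.log t) ^ 2) - M ≤ E := by
    have e1 : A * (x / L ^ 2 + 1744 * x / L ^ 3) = M + M * (1744 / L) := by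
      rw [hMdef]; field_simp
    have e2' : (1744:ℝ) ≤ 2000 * (1 + d / L) * l := by
      nlinarith [mul_nonneg hdb0.le (show (0:ℝ) ≤ l by linarith)]
    have e2 : (1744:ℝ) / L ≤ 2000 * (1 + d / L) * l / L :=
      (div_le_div_iff_of_pos_right hL0).mpr e2'
    have e4 : M * (1744 / L) ≤ M * (2000 * (1 + d / L) * l / L) :=
      mul_le_mul_of_nonneg_left e2 hM0.le
    rw [hEdef]
    linarith [hup, e1, e4]
  -- lower bound
  have hLl : L / 2 ≤ L - l := by linarith
  have hLl0 : 0 < L - l := by linarith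
  have hxL2 : (2:ℝ) ≤ x / L := by
    have hlogx : L ≤ x / 2 := by rw [hLdef]; exact log_le_half x hx0
    rw [le_div_iff₀ hL0]; nlinarith
  have hxLx : x / L ≤ x := by rw [div_le_iff₀ hL0]; nlinarith
  have hlogxL : Real.log (x / L) = L - l := by
    rw [Real.log_div hx0.ne' hL0.ne', ← hLdef, ← hldef]
  set δ := d / (L - l) - d / L with hδdef
  have hδ0 : 0 ≤ δ := by
    rw [hδdef, sub_nonneg, div_le_div_iff₀ hL0 hLl0]
    nlinarith
  have hδeq : δ = d * l / ((L - l) * L) := by rw [hδdef]; field_simp; ring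
  have hδle : δ ≤ 2 * d * l / (L * L) := by
    rw [hδeq, div_le_div_iff₀ (by positivity) (by positivity)]
    nlinarith [mul_nonneg (mul_nonneg (mul_nonneg hd.le hl0.le) hL0.le)
      (show (0:ℝ) ≤ L - 2 * l by linarith)]
  have hlow : A * (1 - δ) * ((x - x / L) / L ^ 2) ≤
      ∫ t in (2:ℝ)..x, Real.exp (-d / Real.log t) / (Real.log t) ^ 2 := by
    have hsplit := intervalIntegral.integral_add_adjacent_intervals
      (ii_exp d le_rfl hxL2) (ii_exp d hxL2 hxLx)
    have hnn : 0 ≤ ∫ t in (2:ℝ)..(x / L), Real.exp (-d / Real.log t) / (Real.log t) ^ 2 := by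
      apply intervalIntegral.integral_nonneg hxL2
      intro t ht
      positivity
    have hlow1 : Real.exp (-(d / (L - l))) / L ^ 2 * (x - x / L) ≤
        ∫ t in (x / L)..x, Real.exp (-d / Real.log t) / (Real.log t) ^ 2 := by
      calc Real.exp (-(d / (L - l))) / L ^ 2 * (x - x / L)
          = ∫ _ in (x / L)..x, (Real.exp (-(d / (L - l))) / L ^ 2) := by
            rw [intervalIntegral.integral_const, smul_eq_mul]; ring
        _ ≤ _ := by
            apply intervalIntegral.integral_mono_on hxLx intervalIntegrable_const
              (ii_exp d hxL2 hxLx)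
            intro t ht
            have h2t : (2:ℝ) ≤ t := le_trans hxL2 ht.1
            have hlt : 0 < Real.log t := logt_pos h2t
            have hlo : L - l ≤ Real.log t := by
              rw [← hlogxL]
              exact Real.log_le_log (by positivity) ht.1
            have hhi : Real.log t ≤ L := Real.log_le_log (by linarith) ht.2
            have hexp : Real.exp (-(d / (L - l))) ≤ Real.exp (-d / Real.log t) := by
              apply Real.exp_le_exp.mpr
              rw [neg_div]
              apply neg_le_neg
              rw [div_le_div_iff₀ hlt hLl0]
              nlinarith
            have hpow : (Real.log t) ^ 2 ≤ L ^ 2 := pow_le_pow_left₀ hlt.le hhi 2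
            rw [div_le_div_iff₀ (by positivity) (pow_pos hlt 2)]
            exact mul_le_mul hexp hpow (by positivity) (Real.exp_pos _).le
    have hexpδ : A * (1 - δ) ≤ Real.exp (-(d / (L - l))) := by
      have h1 : Real.exp (-(d / (L - l))) = A * Real.exp (-δ) := by
        rw [hAdef, ← Real.exp_add]; congr 1; rw [hδdef]; ring
      have h2 : 1 - δ ≤ Real.exp (-δ) := by
        have := Real.add_one_le_exp (-δ); linarith
      rw [h1]
      exact mul_le_mul_of_nonneg_left h2 hA0.le
    have hxpos : 0 ≤ (x - x / L) / L ^ 2 :=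
      div_nonneg (by linarith [hxLx]) (by positivity)
    calc A * (1 - δ) * ((x - x / L) / L ^ 2)
        ≤ Real.exp (-(d / (L - l))) * ((x - x / L) / L ^ 2) :=
          mul_le_mul_of_nonneg_right hexpδ hxpos
      _ = Real.exp (-(d / (L - l))) / L ^ 2 * (x - x / L) := by ring
      _ ≤ ∫ t in (x / L)..x, Real.exp (-d / Real.log t) / (Real.log t) ^ 2 := hlow1
      _ ≤ _ := by rw [← hsplit]; linarith
  have hlow2 : M - (∫ t in (2:ℝ)..x, Real.exp (-d / Real.log t) / (Real.log t) ^ 2) ≤ E := by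
    have hx1 : (x - x / L) / L ^ 2 = (x / L ^ 2) * (1 - 1 / L) := by field_simp
    have hgap : M - A * (1 - δ) * ((x - x / L) / L ^ 2) ≤ M * (δ + 1 / L) := by
      rw [hMdef, hx1]
      have key : A * (x / L ^ 2) * (δ + 1 / L) -
          (A * (x / L ^ 2) - A * (1 - δ) * ((x / L ^ 2) * (1 - 1 / L))) =
          A * (x / L ^ 2) * δ * (1 / L) := by ring
      have hn : (0:ℝ) ≤ A * (x / L ^ 2) * δ * (1 / L) := by positivity
      linarith
    have hEge : M * (δ + 1 / L) ≤ E := by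
      rw [hEdef]
      apply mul_le_mul_of_nonneg_left ?_ hM0.le
      have hid : 2000 * (1 + d / L) * l / L =
          2000 * (l / L) + 2000 * ((d / L) * (l / L)) := by
        field_simp
      have hδ2 : δ ≤ 2 * ((d / L) * (l / L)) := by
        have h : 2 * d * l / (L * L) = 2 * ((d / L) * (l / L)) := by ring
        linarith [hδle, h.ge]
      have h1L : (1:ℝ) / L ≤ l / L := (div_le_div_iff_of_pos_right hL0).mpr hl1
      have hlL0 : (0:ℝ) ≤ (d / L) * (l / L) := by positivity
      have hlL1 : (0:ℝ) ≤ l / L := by positivity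
      rw [hid]
      linarith
    linarith
  rw [abs_sub_le_iff]
  exact ⟨hup2, hlow2⟩
end
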